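/- For every prime p with p ≥ 5, there exists an integer G such that 2 · ∑_{j=1}^{p−1} ∏_{k=1, k≠j}^{p−1} k = p · G and p divides G. -/

import Mathlib

open Finset

theorem harmonic_sum_quotient (p : ℕ) (hp : p.Prime) (h5 : 5 ≤ p) :
    ∃ G : ℤ,
      2 * (∑ j ∈ Finset.Icc 1 (p - 1), ∏ k ∈ (Finset.Icc 1 (p - 1)).erase j, (k : ℤ)) =
          (p : ℤ) * G ∧ (p : ℤ) ∣ G := by
  haveI : Fact p.Prime := ⟨hp⟩
  set F := Finset.Icc 1 (p - 1) with hF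
  set S : ℤ := ∑ j ∈ F, ∏ k ∈ F.erase j, (k : ℤ) with hS
  suffices h : (p : ℤ) ^ 2 ∣ 2 * S by
    obtain ⟨c, hc⟩ := h
    exact ⟨p * c, by rw [hc]; ring, ⟨c, rfl⟩⟩
  have hpsq : ((p : ℤ)^2) = ((p^2 : ℕ) : ℤ) := by push_cast; ring
  rw [hpsq, ← ZMod.intCast_zmod_eq_zero_iff_dvd, hS]
  push_cast
  -- now work in R := ZMod (p^2)
  set R := ZMod (p^2)
  haveI : NeZero (p^2) := ⟨pow_ne_zero 2 hp.ne_zero⟩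
  -- every j ∈ F is a unit in R
  have hmem : ∀ j ∈ F, 1 ≤ j ∧ j ≤ p - 1 := by
    intro j hj; exact Finset.mem_Icc.mp hj
  have hunit : ∀ j ∈ F, IsUnit ((j : ℕ) : R) := by
    intro j hj
    obtain ⟨h1, h2⟩ := hmem j hj
    rw [ZMod.isUnit_iff_coprime]
    have hnd : ¬ p ∣ j := by
      intro hd
      have := Nat.le_of_dvd (by omega) hd
      omega
    exact (Nat.coprime_comm.mp (hp.coprime_iff_not_dvd.mpr hnd)).pow_right 2
  -- rewrite products via inverses
  set W : R := ∏ k ∈ F, ((k : ℕ) : R) with hW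
  have hprod : ∀ j ∈ F, (∏ k ∈ F.erase j, ((k : ℕ) : R)) = ((j : ℕ) : R)⁻¹ * W := by
    intro j hj
    have h1 : ((j : ℕ) : R) * ∏ k ∈ F.erase j, ((k : ℕ) : R) = W :=
      Finset.mul_prod_erase F _ hj
    have h2 : ((j : ℕ) : R)⁻¹ * ((j : ℕ) : R) = 1 := ZMod.inv_mul_of_unit _ (hunit j hj)
    calc (∏ k ∈ F.erase j, ((k : ℕ) : R))
        = (((j : ℕ) : R)⁻¹ * ((j : ℕ) : R)) * ∏ k ∈ F.erase j, ((k : ℕ) : R) := by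
          rw [h2, one_mul]
      _ = ((j : ℕ) : R)⁻¹ * W := by rw [mul_assoc, h1]
  rw [Finset.sum_congr rfl hprod, ← Finset.sum_mul]
  set T : R := ∑ j ∈ F, ((j : ℕ) : R)⁻¹ with hT
  suffices h2T : 2 * T = 0 by
    rw [← mul_assoc, h2T, zero_mul]
  -- reindex by j ↦ p - j
  have hflip : T = ∑ j ∈ F, (((p - j : ℕ)) : R)⁻¹ := by
    rw [hT]
    refine (Finset.sum_nbij' (fun j => p - j) (fun j => p - j) ?_ ?_ ?_ ?_ ?_).symm
    · intro a ha; obtain ⟨h1, h2⟩ := hmem a ha; simp only [hF, Finset.mem_Icc]; omega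
    · intro a ha; obtain ⟨h1, h2⟩ := hmem a ha; simp only [hF, Finset.mem_Icc]; omega
    · intro a ha; obtain ⟨h1, h2⟩ := hmem a ha; show p - (p - a) = a; omega
    · intro a ha; obtain ⟨h1, h2⟩ := hmem a ha; show p - (p - a) = a; omega
    · intro a ha; rfl
  have key : 2 * T = (p : R) * ∑ j ∈ F, (((j : ℕ) : R)⁻¹ * (((p - j : ℕ)) : R)⁻¹) := by
    have : 2 * T = ∑ j ∈ F, (((j : ℕ) : R)⁻¹ + (((p - j : ℕ)) : R)⁻¹) := by
      rw [Finset.sum_add_distrib, ← hflip, two_mul]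
    rw [this, Finset.mul_sum]
    refine Finset.sum_congr rfl ?_
    intro j hj
    obtain ⟨h1, h2⟩ := hmem j hj
    have hjF' : p - j ∈ F := by simp only [hF, Finset.mem_Icc]; omega
    have ha := hunit j hj
    have hb := hunit _ hjF'
    have hab : ((j : ℕ) : R) + ((p - j : ℕ) : R) = (p : R) := by
      rw [Nat.cast_sub (by omega : j ≤ p)]; ring
    have h1' : ((j : ℕ) : R) * ((j : ℕ) : R)⁻¹ = 1 := ZMod.mul_inv_of_unit _ ha
    have h2' : ((p - j : ℕ) : R) * ((p - j : ℕ) : R)⁻¹ = 1 := ZMod.mul_inv_of_unit _ hb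
    calc ((j : ℕ) : R)⁻¹ + ((p - j : ℕ) : R)⁻¹
        = (((j : ℕ) : R) * ((j : ℕ) : R)⁻¹) * ((p - j : ℕ) : R)⁻¹
          + (((p - j : ℕ) : R) * ((p - j : ℕ) : R)⁻¹) * ((j : ℕ) : R)⁻¹ := by
          rw [h1', h2']; ring
      _ = (((j : ℕ) : R) + ((p - j : ℕ) : R)) * (((j : ℕ) : R)⁻¹ * ((p - j : ℕ) : R)⁻¹) := by
          ring
      _ = (p : R) * (((j : ℕ) : R)⁻¹ * ((p - j : ℕ) : R)⁻¹) := by rw [hab]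
  rw [key]
  -- it suffices that the sum reduces to 0 mod p
  set X : R := ∑ j ∈ F, (((j : ℕ) : R)⁻¹ * (((p - j : ℕ)) : R)⁻¹) with hX
  have hdvd : (p : ℕ) ∣ p ^ 2 := dvd_pow_self p two_ne_zero
  set φ : R →+* ZMod p := ZMod.castHom hdvd (ZMod p) with hφ
  suffices hXz : φ X = 0 by
    obtain ⟨m, hm⟩ := ZMod.natCast_zmod_surjective (n := p^2) X
    have hpm : (p : ℕ) ∣ m := by
      have h0 : ((m : ℕ) : ZMod p) = 0 := by
        have h1 : φ ((m : ℕ) : R) = ((m : ℕ) : ZMod p) := map_natCast φ m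
        rw [← h1, hm, hXz]
      exact (ZMod.natCast_eq_zero_iff m p).mp h0
    obtain ⟨t, ht⟩ := hpm
    rw [← hm, ht]
    have h1 : ((p : ℕ) : R) * (((p * t : ℕ)) : R) = ((p ^ 2 : ℕ) : R) * ((t : ℕ) : R) := by
      rw [Nat.cast_mul, Nat.cast_pow]; ring
    rw [h1, ZMod.natCast_self, zero_mul]
  -- compute φ X in ZMod p
  have hφinv : ∀ j ∈ F, φ (((j : ℕ) : R)⁻¹) = (((j : ℕ) : ZMod p))⁻¹ := by
    intro j hj
    have h1 : φ (((j : ℕ) : R)⁻¹) * φ ((j : ℕ) : R) = 1 := by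
      rw [← map_mul, ZMod.inv_mul_of_unit _ (hunit j hj), map_one]
    rw [map_natCast φ j] at h1
    exact eq_inv_of_mul_eq_one_left h1
  have hXcalc : φ X = -∑ j ∈ F, (((j : ℕ) : ZMod p))⁻¹ ^ 2 := by
    rw [hX, map_sum, ← Finset.sum_neg_distrib]
    refine Finset.sum_congr rfl ?_
    intro j hj
    obtain ⟨h1, h2⟩ := hmem j hj
    have hjF' : p - j ∈ F := by simp only [hF, Finset.mem_Icc]; omega
    have hpj : ((p - j : ℕ) : ZMod p) = -((j : ℕ) : ZMod p) := by
      rw [Nat.cast_sub (by omega : j ≤ p), ZMod.natCast_self, zero_sub]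
    rw [map_mul, hφinv j hj, hφinv _ hjF', hpj, inv_neg, sq]
    ring
  rw [hXcalc]
  have h0F : (0 : ℕ) ∉ F := by simp [hF]
  have hrange : Finset.range p = insert 0 F := by
    ext x
    simp only [Finset.mem_range, Finset.mem_insert, hF, Finset.mem_Icc]
    omega
  have hsum1 : ∑ j ∈ Finset.range p, (((j : ℕ) : ZMod p))⁻¹ ^ 2
      = ∑ j ∈ F, (((j : ℕ) : ZMod p))⁻¹ ^ 2 := by
    rw [hrange, Finset.sum_insert h0F]
    simp
  have hsum2 : ∑ j ∈ Finset.range p, (((j : ℕ) : ZMod p))⁻¹ ^ 2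
      = ∑ x : ZMod p, (x⁻¹) ^ 2 := by
    refine Finset.sum_nbij' (fun j => ((j : ℕ) : ZMod p)) (fun x => x.val) ?_ ?_ ?_ ?_ ?_
    · intro a _; exact Finset.mem_univ _
    · intro x _; exact Finset.mem_range.mpr (ZMod.val_lt x)
    · intro a ha; exact ZMod.val_natCast_of_lt (Finset.mem_range.mp ha)
    · intro x _; exact ZMod.natCast_rightInverse x
    · intro a _; rfl
  have hsum3 : ∑ x : ZMod p, (x⁻¹) ^ 2 = ∑ x : ZMod p, x ^ 2 := by
    exact Fintype.sum_equiv (Equiv.inv (ZMod p)) _ _ (fun x => rfl)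
  have hsum4 : ∑ x : ZMod p, x ^ 2 = 0 :=
    FiniteField.sum_pow_lt_card_sub_one (ZMod p) 2 (by rw [ZMod.card]; omega)
  rw [← hsum1, hsum2, hsum3, hsum4, neg_zero]
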